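/- Let Φ₁ be holomorphic on the closed upper half-plane with |Φ₁(z)| ≤ exp(−√|z|) there. Define σ(λ) = ∫_{−∞}^λ Re Φ₁(t) dt. Then for every x ≥ 0, ∫_{−∞}^∞ cos(x√λ) dσ(λ) = 0, where cos(x√λ) = cosh(x√(−λ)) for λ < 0. -/

import Mathlib

open Complex MeasureTheory Real Set Filter Metric

noncomputable section



/-- abs of principal square root -/
lemma CT.abs_sqrt (z : ℂ) : ‖(z ^ (1/2 : ℂ))‖ = Real.sqrt (‖z‖) := by
  rcases eq_or_ne z 0 with rfl | hz
  · rw [Complex.zero_cpow (by norm_num), norm_zero, Real.sqrt_zero]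
  · rw [Complex.norm_cpow_of_ne_zero hz]
    simp [Real.sqrt_eq_rpow]

lemma CT.im_sqrt_nonneg {z : ℂ} (hz : 0 ≤ z.im) : 0 ≤ (z ^ (1/2 : ℂ)).im := by
  have h : ((1:ℂ)/2) = ((1/2 : ℝ) : ℂ) := by norm_num
  rw [h, Complex.cpow_ofReal_im]
  apply mul_nonneg (Real.rpow_nonneg (norm_nonneg z) _)
  apply Real.sin_nonneg_of_nonneg_of_le_pi
  · exact mul_nonneg (Complex.arg_nonneg_iff.2 hz) (by norm_num)
  · nlinarith [Complex.arg_le_pi z, Real.pi_pos]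

lemma CT.im_sqrt_le (z : ℂ) : (z ^ (1/2 : ℂ)).im ≤ Real.sqrt (‖z‖) := by
  calc (z ^ (1/2 : ℂ)).im ≤ ‖(z ^ (1/2 : ℂ))‖ := Complex.im_le_norm _
  _ = _ := CT.abs_sqrt z

lemma CT.abs_cos_le (w : ℂ) : ‖(Complex.cos w)‖ ≤ Real.exp |w.im| := by
  rw [Complex.cos]
  calc ‖((Complex.exp (w * I) + Complex.exp (-w * I)) / 2)‖
      ≤ (‖(Complex.exp (w * I))‖ + ‖(Complex.exp (-w * I))‖) / 2 := by
        rw [norm_div]; simp only [Complex.norm_ofNat]; gcongr; exact norm_add_le _ _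
    _ = (Real.exp (-w.im) + Real.exp w.im) / 2 := by
        rw [Complex.norm_exp, Complex.norm_exp]; simp [Complex.mul_I_re]
    _ ≤ Real.exp |w.im| := by
        have h1 : Real.exp (-w.im) ≤ Real.exp |w.im| := Real.exp_le_exp.2 (neg_le_abs _)
        have h2 : Real.exp w.im ≤ Real.exp |w.im| := Real.exp_le_exp.2 (le_abs_self _)
        linarith

lemma CT.abs_sin_le (w : ℂ) : ‖(Complex.sin w)‖ ≤ Real.exp |w.im| := by
  rw [Complex.sin]
  calc ‖((Complex.exp (-w * I) - Complex.exp (w * I)) * I / 2)‖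
      ≤ (‖(Complex.exp (-w * I))‖ + ‖(Complex.exp (w * I))‖) / 2 := by
        rw [norm_div, norm_mul]; simp only [Complex.norm_I, mul_one, Complex.norm_ofNat]
        gcongr ?_ / 2; exact (norm_sub_le _ _)
    _ ≤ Real.exp |w.im| := by
        rw [Complex.norm_exp, Complex.norm_exp]
        have h1 : Real.exp ((-w*I).re) ≤ Real.exp |w.im| := by
          rw [Real.exp_le_exp]; simp [Complex.mul_I_re]; exact le_abs_self _
        have h2 : Real.exp ((w*I).re) ≤ Real.exp |w.im| := by
          rw [Real.exp_le_exp]; simp [Complex.mul_I_re]; exact neg_le_abs _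
        linarith

lemma CT.abs_cosh_le (w : ℂ) : ‖(Complex.cosh w)‖ ≤ Real.exp |w.re| := by
  rw [Complex.cosh]
  calc ‖((Complex.exp w + Complex.exp (-w)) / 2)‖
      ≤ (‖(Complex.exp w)‖ + ‖(Complex.exp (-w))‖) / 2 := by
        rw [norm_div]; simp only [Complex.norm_ofNat]; gcongr; exact (norm_add_le _ _)
    _ ≤ Real.exp |w.re| := by
        rw [Complex.norm_exp, Complex.norm_exp, Complex.neg_re]
        have h1 : Real.exp w.re ≤ Real.exp |w.re| := Real.exp_le_exp.2 (le_abs_self _)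
        have h2 : Real.exp (-w.re) ≤ Real.exp |w.re| := Real.exp_le_exp.2 (neg_le_abs _)
        linarith

lemma CT.abs_sinh_le (w : ℂ) : ‖(Complex.sinh w)‖ ≤ Real.exp |w.re| := by
  rw [Complex.sinh]
  calc ‖((Complex.exp w - Complex.exp (-w)) / 2)‖
      ≤ (‖(Complex.exp w)‖ + ‖(Complex.exp (-w))‖) / 2 := by
        rw [norm_div]; simp only [Complex.norm_ofNat]; gcongr; exact (norm_sub_le _ _)
    _ ≤ Real.exp |w.re| := by
        rw [Complex.norm_exp, Complex.norm_exp, Complex.neg_re]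
        have h1 : Real.exp w.re ≤ Real.exp |w.re| := Real.exp_le_exp.2 (le_abs_self _)
        have h2 : Real.exp (-w.re) ≤ Real.exp |w.re| := Real.exp_le_exp.2 (neg_le_abs _)
        linarith

/-- values of the principal square root on the real axis -/
lemma CT.sqrt_ofReal_nonneg {l : ℝ} (h : 0 ≤ l) :
    (l : ℂ) ^ (1/2 : ℂ) = (Real.sqrt l : ℂ) := by
  have h2 : ((1:ℂ)/2) = ((1/2 : ℝ) : ℂ) := by norm_num
  rw [h2, ← Complex.ofReal_cpow h (1/2), ← Real.sqrt_eq_rpow]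

lemma CT.sqrt_ofReal_neg {l : ℝ} (h : l < 0) :
    (l : ℂ) ^ (1/2 : ℂ) = (Real.sqrt (-l) : ℂ) * I := by
  rw [Complex.ofReal_cpow_of_nonpos h.le]
  have h1 : (-(l : ℂ)) ^ (1/2 : ℂ) = (Real.sqrt (-l) : ℂ) := by
    rw [show -(l:ℂ) = ((-l : ℝ) : ℂ) by push_cast; ring]
    exact CT.sqrt_ofReal_nonneg (by linarith)
  rw [h1]
  congr 1
  have : (↑Real.pi * I * (1/2 : ℂ)) = ((Real.pi/2 : ℝ) : ℂ) * I := by push_cast; ring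
  rw [this, Complex.exp_mul_I, ← Complex.ofReal_cos, ← Complex.ofReal_sin,
    Real.cos_pi_div_two, Real.sin_pi_div_two]
  norm_num




/-- exp(-v) ≤ (6/v)^6 for v > 0 -/
lemma CT.exp_neg_le {v : ℝ} (hv : 0 < v) : Real.exp (-v) ≤ (6/v)^6 := by
  rw [Real.exp_neg]
  rw [inv_le_comm₀ (Real.exp_pos v) (by positivity)]
  have h1 : ((v/6)^6 : ℝ) ≤ Real.exp v := by
    calc ((v/6)^6 : ℝ) ≤ (v/6 + 1)^6 := by
          apply pow_le_pow_left₀ (by positivity) (by linarith)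
    _ ≤ (Real.exp (v/6))^6 := by
          apply pow_le_pow_left₀ (by positivity) (Real.add_one_le_exp (v/6))
    _ = Real.exp v := by rw [← Real.exp_nat_mul]; congr 1; push_cast; ring
  calc ((6/v)^6)⁻¹ = (v/6)^6 := by rw [← inv_pow, inv_div]
  _ ≤ Real.exp v := h1

/-- master integrability: (1+√t)·exp(-c√t) integrable on (0,∞) -/
lemma CT.integrableOn_master {c : ℝ} (hc : 0 < c) :
    IntegrableOn (fun t : ℝ => (1 + Real.sqrt t) * Real.exp (-c * Real.sqrt t)) (Ioi 0) := by
  have hcont : Continuous (fun t : ℝ => (1 + Real.sqrt t) * Real.exp (-c * Real.sqrt t)) := by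
    continuity
  have h1 : IntegrableOn (fun t : ℝ => (1 + Real.sqrt t) * Real.exp (-c * Real.sqrt t)) (Ioc 0 1) := by
    apply (hcont.continuousOn).integrableOn_compact isCompact_Icc |>.mono_set Ioc_subset_Icc_self
  have h2 : IntegrableOn (fun t : ℝ => (1 + Real.sqrt t) * Real.exp (-c * Real.sqrt t)) (Ioi 1) := by
    have hK : IntegrableOn (fun t : ℝ => (2 * 6^6 / c^6) * t ^ (-2 : ℝ)) (Ioi 1) :=
      (integrableOn_Ioi_rpow_of_lt (by norm_num) one_pos).const_mul _
    apply hK.mono' (hcont.aestronglyMeasurable.restrict)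
    filter_upwards [ae_restrict_mem measurableSet_Ioi] with t ht
    have ht1 : (1:ℝ) ≤ t := ht.le
    have hst : (1:ℝ) ≤ Real.sqrt t := by
      rw [show (1:ℝ) = Real.sqrt 1 by simp]; exact Real.sqrt_le_sqrt ht1
    have hpos : (0:ℝ) < Real.sqrt t := by linarith
    have hb : Real.exp (-c * Real.sqrt t) ≤ (6 / (c * Real.sqrt t))^6 := by
      rw [neg_mul]; exact CT.exp_neg_le (by positivity)
    have key : (1 + Real.sqrt t) * Real.exp (-c * Real.sqrt t) ≤ (2 * 6^6 / c^6) * t ^ (-2 : ℝ) := by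
      have h3 : (1 + Real.sqrt t) ≤ 2 * Real.sqrt t := by linarith
      have h5 : Real.sqrt t ^ 6 = t^3 := by
        rw [show (6:ℕ) = 2*3 by norm_num, pow_mul, Real.sq_sqrt (by linarith)]
      have h4 : (1 + Real.sqrt t) * Real.exp (-c * Real.sqrt t)
          ≤ 2 * Real.sqrt t * (6^6 / (c^6 * t^3)) := by
        calc (1 + Real.sqrt t) * Real.exp (-c * Real.sqrt t)
            ≤ 2 * Real.sqrt t * ((6 / (c * Real.sqrt t))^6) := by
              apply mul_le_mul h3 hb (Real.exp_pos _).le (by positivity)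
          _ = 2 * Real.sqrt t * (6^6 / (c^6 * t^3)) := by
              rw [div_pow, mul_pow, h5]
      calc (1 + Real.sqrt t) * Real.exp (-c * Real.sqrt t)
          ≤ 2 * Real.sqrt t * (6^6 / (c^6 * t^3)) := h4
        _ = (2 * 6^6 / c^6) * (Real.sqrt t / t^3) := by ring
        _ ≤ (2 * 6^6 / c^6) * t ^ (-2 : ℝ) := by
            have ht0 : (0:ℝ) < t := by linarith
            have hrp : t ^ (-2 : ℝ) = (t^2)⁻¹ := by
              rw [show ((-2 : ℝ)) = ((-2 : ℤ) : ℝ) by norm_num, Real.rpow_intCast, zpow_neg,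
                zpow_two]; ring_nf
            rw [hrp]
            apply mul_le_mul_of_nonneg_left _ (by positivity)
            rw [div_le_iff₀ (by positivity)]
            have : Real.sqrt t ≤ t := by
              calc Real.sqrt t ≤ Real.sqrt (t^2) := Real.sqrt_le_sqrt (by nlinarith)
                _ = t := Real.sqrt_sq (by linarith)
            calc Real.sqrt t ≤ t := this
              _ = (t^2)⁻¹ * t^3 := by field_simp
    calc ‖(1 + Real.sqrt t) * Real.exp (-c * Real.sqrt t)‖
        = (1 + Real.sqrt t) * Real.exp (-c * Real.sqrt t) := by
          rw [Real.norm_eq_abs, _root_.abs_of_nonneg (by positivity)]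
      _ ≤ _ := key
  have := h1.union h2
  rwa [Ioc_union_Ioi_eq_Ioi (by norm_num : (0:ℝ) ≤ 1)] at this




lemma CT.continuousOn_sqrt : ContinuousOn (fun z : ℂ => z ^ (1/2 : ℂ)) {z : ℂ | 0 ≤ z.im} := by
  intro z hz
  rcases eq_or_ne z 0 with rfl | hz0
  · -- continuity at 0
    have h := Complex.continuousAt_cpow_zero_of_re_pos (z := (1/2 : ℂ)) (by norm_num)
    have : ContinuousAt (fun z : ℂ => z ^ (1/2 : ℂ)) 0 := by
      have hcomp : ContinuousAt (fun z : ℂ => ((z, (1/2:ℂ)) : ℂ × ℂ)) 0 :=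
        (continuous_id.prodMk continuous_const).continuousAt
      exact ContinuousAt.comp (g := fun x : ℂ × ℂ => x.1 ^ x.2) (by exact h) hcomp
    exact this.continuousWithinAt
  rcases lt_or_ge z.re 0 with hre | hre
  · -- negative real axis or interior with re<0
    rcases eq_or_ne z.im 0 with him | him
    · -- the branch-cut case: continuity within the upper half-plane
      have hlog : ContinuousWithinAt Complex.log {z : ℂ | 0 ≤ z.im} z :=
        Complex.continuousWithinAt_log_of_re_neg_of_im_zero hre him
      have hexp : ContinuousWithinAt (fun z : ℂ => Complex.exp (Complex.log z * (1/2)))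
          {z : ℂ | 0 ≤ z.im} z :=
        (Complex.continuous_exp.continuousAt).comp_continuousWithinAt (hlog.mul continuousWithinAt_const)
      apply hexp.congr_of_eventuallyEq
      · have hne : ∀ᶠ w in nhdsWithin z {z : ℂ | 0 ≤ z.im}, w ≠ 0 := by
          apply eventually_nhdsWithin_of_eventually_nhds
          exact (isOpen_compl_singleton (x := (0:ℂ))).eventually_mem hz0
        filter_upwards [hne] with w hw
        rw [Complex.cpow_def_of_ne_zero hw]
      · rw [Complex.cpow_def_of_ne_zero hz0]
    · exact ((continuousAt_cpow_const (by rw [Complex.mem_slitPlane_iff]; right; exact him))).continuousWithinAt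
  · rcases hre.eq_or_lt with hre0 | hrepos
    · -- re = 0, z ≠ 0 so im ≠ 0
      have him : z.im ≠ 0 := by
        intro h; apply hz0; exact Complex.ext (by simp [← hre0]) h
      exact ((continuousAt_cpow_const (by rw [Complex.mem_slitPlane_iff]; right; exact him))).continuousWithinAt
    · exact ((continuousAt_cpow_const (by rw [Complex.mem_slitPlane_iff]; left; exact hrepos))).continuousWithinAt

lemma CT.differentiableAt_sqrt {z : ℂ} (hz : 0 < z.im) :
    DifferentiableAt ℂ (fun z : ℂ => z ^ (1/2 : ℂ)) z := by
  have h : z ∈ Complex.slitPlane := by rw [Complex.mem_slitPlane_iff]; right; exact hz.ne'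
  exact (differentiableAt_id.cpow (differentiableAt_const _) h)




lemma CT.tendsto_sqrt_atTop : Tendsto Real.sqrt atTop atTop := by
  apply tendsto_atTop_atTop.2
  intro b
  refine ⟨max (b^2) 0, fun a ha => ?_⟩
  have h1 : b ≤ |b| := le_abs_self b
  calc b ≤ |b| := h1
    _ = Real.sqrt (b^2) := (Real.sqrt_sq_eq_abs b).symm
    _ ≤ Real.sqrt a := Real.sqrt_le_sqrt (le_trans (le_max_left _ _) ha)


/-- integrability of exp(-c√|t|) on ℝ -/
lemma CT.integrable_exp_neg_sqrt_abs {c : ℝ} (hc : 0 < c) :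
    Integrable (fun t : ℝ => Real.exp (-c * Real.sqrt |t|)) := by
  have hcont : Continuous (fun t : ℝ => Real.exp (-c * Real.sqrt |t|)) := by continuity
  have hIoi : IntegrableOn (fun t : ℝ => Real.exp (-c * Real.sqrt |t|)) (Ioi 0) := by
    apply (CT.integrableOn_master hc).mono' (hcont.aestronglyMeasurable.restrict)
    filter_upwards [ae_restrict_mem measurableSet_Ioi] with t ht
    rw [Real.norm_eq_abs, _root_.abs_of_nonneg (Real.exp_pos _).le,
      _root_.abs_of_nonneg (le_of_lt ht)]
    nlinarith [Real.exp_pos (-c * Real.sqrt t), Real.sqrt_nonneg t,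
      mul_nonneg (Real.sqrt_nonneg t) (Real.exp_pos (-c * Real.sqrt t)).le]
  have hIic : IntegrableOn (fun t : ℝ => Real.exp (-c * Real.sqrt |t|)) (Iic 0) := by
    rw [← Measure.map_neg_eq_self (volume : Measure ℝ)]
    have m : MeasurableEmbedding fun x : ℝ => -x :=
      (Homeomorph.neg ℝ).isClosedEmbedding.measurableEmbedding
    rw [m.integrableOn_map_iff]
    simp only [Function.comp_def, abs_neg, neg_preimage, neg_Iic, neg_zero]
    exact Iff.mpr integrableOn_Ici_iff_integrableOn_Ioi hIoi
  rw [← integrableOn_univ, ← Iic_union_Ioi (a := (0:ℝ))]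
  exact hIic.union hIoi

lemma CT.lemmaA (Φ₁ : ℂ → ℂ)
    (hol : DifferentiableOn ℂ Φ₁ {z : ℂ | 0 < z.im})
    (cont : ContinuousOn Φ₁ {z : ℂ | 0 ≤ z.im})
    (hbound : ∀ z : ℂ, 0 ≤ z.im → ‖Φ₁ z‖ ≤ Real.exp (-Real.sqrt (‖z‖)))
    {x : ℝ} (hx0 : 0 ≤ x) (hx1 : x < 1) :
    ∫ t : ℝ, Complex.cos (x * (t:ℂ) ^ (1/2:ℂ)) * Φ₁ t = 0 := by
  set f : ℂ → ℂ := fun z => Complex.cos (x * z ^ (1/2:ℂ)) * Φ₁ z with hf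
  have hb : ∀ z : ℂ, 0 ≤ z.im → ‖f z‖ ≤ Real.exp ((x-1) * Real.sqrt (‖z‖)) := by
    intro z hz
    have h1 : ‖f z‖ = ‖(Complex.cos (x * z ^ (1/2:ℂ)))‖ * ‖Φ₁ z‖ := by
      rw [hf]; simp [norm_mul]
    have h2 : ‖(Complex.cos (x * z ^ (1/2:ℂ)))‖ ≤ Real.exp (x * Real.sqrt (‖z‖)) := by
      refine (CT.abs_cos_le _).trans (Real.exp_le_exp.2 ?_)
      have him : ((x:ℂ) * z ^ (1/2:ℂ)).im = x * (z ^ (1/2:ℂ)).im := by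
        simp [Complex.mul_im]
      rw [him, _root_.abs_of_nonneg (mul_nonneg hx0 (CT.im_sqrt_nonneg hz))]
      exact mul_le_mul_of_nonneg_left (CT.im_sqrt_le z) hx0
    calc ‖f z‖ ≤ Real.exp (x * Real.sqrt (‖z‖)) * Real.exp (-Real.sqrt (‖z‖)) := by
          rw [h1]; exact mul_le_mul h2 (hbound z hz) (norm_nonneg _) (Real.exp_pos _).le
      _ = Real.exp ((x-1) * Real.sqrt (‖z‖)) := by
          rw [← Real.exp_add]; congr 1; ring
  have hcf : ContinuousOn f {z : ℂ | 0 ≤ z.im} := by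
    apply ContinuousOn.mul _ cont
    exact Complex.continuous_cos.comp_continuousOn (continuousOn_const.mul CT.continuousOn_sqrt)
  have hdf : ∀ z : ℂ, 0 < z.im → DifferentiableAt ℂ f z := by
    intro z hz
    have h1 : DifferentiableAt ℂ (fun z : ℂ => Complex.cos (x * z ^ (1/2:ℂ))) z := by
      apply Complex.differentiable_cos.differentiableAt.comp
      exact (CT.differentiableAt_sqrt hz).const_mul _
    have h2 : DifferentiableAt ℂ Φ₁ z := by
      apply hol.differentiableAt
      exact (isOpen_lt continuous_const Complex.continuous_im).mem_nhds hz
    exact h1.mul h2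
  have hfreal : Continuous (fun t : ℝ => f (t:ℂ)) := by
    apply hcf.comp_continuous Complex.continuous_ofReal
    intro t; simp
  have hInt : Integrable (fun t : ℝ => f (t:ℂ)) := by
    apply Integrable.mono' (g := fun t : ℝ => Real.exp (-(1-x) * Real.sqrt |t|))
      (CT.integrable_exp_neg_sqrt_abs (by linarith)) hfreal.aestronglyMeasurable
    filter_upwards with t
    have := hb (t:ℂ) (by simp)
    rwa [Complex.norm_real, Real.norm_eq_abs, show ((x - 1) : ℝ) = -(1-x) by ring] at this
  -- the rectangle identity
  have rect : ∀ R : ℝ, 0 ≤ R →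
      (∫ t in (-R)..R, f ↑t) =
        (∫ t in (-R)..R, f (↑t + ↑(R^2)*I)) - I • (∫ y in (0:ℝ)..(R^2 : ℝ), f (↑R + ↑y*I))
          + I • (∫ y in (0:ℝ)..(R^2 : ℝ), f (-↑R + ↑y*I)) := by
    intro R hR
    have h0 := Complex.integral_boundary_rect_eq_zero_of_continuousOn_of_differentiableOn f
      (((-R:ℝ)):ℂ) (((R:ℝ):ℂ) + ((R^2:ℝ):ℂ)*I) ?_ ?_
    rotate_left
    · apply hcf.mono
      intro ζ hζ
      rw [Complex.mem_reProdIm] at hζ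
      obtain ⟨-, h2⟩ := hζ
      have ha : ((((-R:ℝ)):ℂ)).im = 0 := by simp
      have hbb : ((((R:ℝ):ℂ) + ((R^2:ℝ):ℂ)*I)).im = R^2 := by simp [← Complex.ofReal_pow]
      rw [ha, hbb, Set.uIcc_of_le (by positivity)] at h2
      exact h2.1
    · intro ζ hζ
      rw [Complex.mem_reProdIm] at hζ
      obtain ⟨-, h2⟩ := hζ
      have ha : ((((-R:ℝ)):ℂ)).im = 0 := by simp
      have hbb : ((((R:ℝ):ℂ) + ((R^2:ℝ):ℂ)*I)).im = R^2 := by simp [← Complex.ofReal_pow]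
      rw [ha, hbb] at h2
      have hmin : min (0:ℝ) (R^2) = 0 := min_eq_left (by positivity)
      rw [hmin] at h2
      exact (hdf ζ h2.1).differentiableWithinAt
    · simp only [Complex.ofReal_neg, Complex.neg_re, Complex.ofReal_re, Complex.add_re,
        Complex.mul_re, Complex.I_re, Complex.I_im, Complex.ofReal_im, Complex.add_im,
        Complex.mul_im, Complex.neg_im, neg_zero, mul_zero, zero_mul, mul_one, sub_zero,
        add_zero, zero_add, Complex.ofReal_zero] at h0
      linear_combination h0
  -- norm estimates for the three far edges
  have est : ∀ R : ℝ, 1 ≤ R →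
      ‖(∫ t in (-R)..R, f ↑t)‖ ≤
        2*R*Real.exp ((x-1)*R) + 2*(R^2*Real.exp ((x-1)*Real.sqrt R)) := by
    intro R hR1
    have hR : (0:ℝ) ≤ R := by linarith
    rw [rect R hR]
    have etop : ‖(∫ t in (-R)..R, f (↑t + ↑(R^2)*I))‖ ≤ Real.exp ((x-1)*R) * |R - (-R)| := by
      apply intervalIntegral.norm_integral_le_of_norm_le_const
      intro t ht
      have him : (↑t + ↑(R^2)*I).im = R^2 := by simp [← Complex.ofReal_pow]
      have habs : R^2 ≤ ‖(↑t + ↑(R^2)*I)‖ := by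
        calc R^2 = |(↑t + ↑(R^2)*I).im| := by rw [him]; exact (_root_.abs_of_nonneg (by positivity)).symm
          _ ≤ _ := Complex.abs_im_le_norm _
      calc ‖f (↑t + ↑(R^2)*I)‖ ≤ Real.exp ((x-1) * Real.sqrt (‖(↑t + ↑(R^2)*I)‖)) :=
            hb _ (by rw [him]; positivity)
        _ ≤ Real.exp ((x-1)*R) := by
            apply Real.exp_le_exp.2
            have h1 : R ≤ Real.sqrt (‖(↑t + ↑(R^2)*I)‖) := by
              calc R = Real.sqrt (R^2) := by rw [Real.sqrt_sq hR]
                _ ≤ _ := Real.sqrt_le_sqrt habs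
            nlinarith
    have eright : ‖(∫ y in (0:ℝ)..(R^2:ℝ), f (↑R + ↑y*I))‖ ≤ Real.exp ((x-1)*Real.sqrt R) * |R^2 - 0| := by
      apply intervalIntegral.norm_integral_le_of_norm_le_const
      intro y hy
      rw [Set.uIoc_of_le (by positivity)] at hy
      have him : (↑R + ↑y*I).im = y := by simp
      have habs : R ≤ ‖(↑R + ↑y*I)‖ := by
        calc R = |(↑R + ↑y*I).re| := by simp [_root_.abs_of_nonneg hR]
          _ ≤ _ := Complex.abs_re_le_norm _
      calc ‖f (↑R + ↑y*I)‖ ≤ Real.exp ((x-1) * Real.sqrt (‖(↑R + ↑y*I)‖)) :=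
            hb _ (by rw [him]; exact hy.1.le)
        _ ≤ Real.exp ((x-1)*Real.sqrt R) := by
            apply Real.exp_le_exp.2
            have h1 : Real.sqrt R ≤ Real.sqrt (‖(↑R + ↑y*I)‖) := Real.sqrt_le_sqrt habs
            nlinarith
    have eleft : ‖(∫ y in (0:ℝ)..(R^2:ℝ), f (-↑R + ↑y*I))‖ ≤ Real.exp ((x-1)*Real.sqrt R) * |R^2 - 0| := by
      apply intervalIntegral.norm_integral_le_of_norm_le_const
      intro y hy
      rw [Set.uIoc_of_le (by positivity)] at hy
      have him : (-↑R + ↑y*I : ℂ).im = y := by simp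
      have habs : R ≤ ‖(-↑R + ↑y*I : ℂ)‖ := by
        calc R = |(-↑R + ↑y*I : ℂ).re| := by simp [_root_.abs_of_nonneg hR]
          _ ≤ _ := Complex.abs_re_le_norm _
      calc ‖f (-↑R + ↑y*I)‖ ≤ Real.exp ((x-1) * Real.sqrt (‖(-↑R + ↑y*I : ℂ)‖)) :=
            hb _ (by rw [him]; exact hy.1.le)
        _ ≤ Real.exp ((x-1)*Real.sqrt R) := by
            apply Real.exp_le_exp.2
            have h1 : Real.sqrt R ≤ Real.sqrt (‖(-↑R + ↑y*I : ℂ)‖) := Real.sqrt_le_sqrt habs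
            nlinarith
    have hIabs : ∀ w : ℂ, ‖I • w‖ = ‖w‖ := by
      intro w; rw [norm_smul]; simp
    set A := (∫ t in (-R)..R, f (↑t + ↑(R^2)*I)) with hA
    set Cr := (∫ y in (0:ℝ)..(R^2 : ℝ), f (↑R + ↑y*I)) with hC
    set D := (∫ y in (0:ℝ)..(R^2 : ℝ), f (-↑R + ↑y*I)) with hD
    have tri : ‖A - I•Cr + I•D‖ ≤ ‖A‖ + ‖Cr‖ + ‖D‖ := by
      calc ‖A - I•Cr + I•D‖ ≤ ‖A - I•Cr‖ + ‖I•D‖ := norm_add_le _ _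
        _ ≤ (‖A‖ + ‖I•Cr‖) + ‖I•D‖ := add_le_add (norm_sub_le _ _) le_rfl
        _ = ‖A‖ + ‖Cr‖ + ‖D‖ := by rw [hIabs, hIabs]
    calc ‖A - I•Cr + I•D‖ ≤ ‖A‖ + ‖Cr‖ + ‖D‖ := tri
      _ ≤ Real.exp ((x-1)*R) * |R - (-R)| + Real.exp ((x-1)*Real.sqrt R) * |R^2 - 0|
          + Real.exp ((x-1)*Real.sqrt R) * |R^2 - 0| :=
          add_le_add (add_le_add etop eright) eleft
      _ = 2*R*Real.exp ((x-1)*R) + 2*(R^2*Real.exp ((x-1)*Real.sqrt R)) := by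
          rw [_root_.abs_of_nonneg (by linarith : (0:ℝ) ≤ R - (-R)),
            _root_.abs_of_nonneg (by nlinarith [sq_nonneg R] : (0:ℝ) ≤ R^2 - 0)]
          ring
  -- the bound tends to zero
  have hbnd0 : Tendsto (fun R : ℝ => 2*R*Real.exp ((x-1)*R) + 2*(R^2*Real.exp ((x-1)*Real.sqrt R)))
      atTop (nhds 0) := by
    have hc1 : (0:ℝ) < 1 - x := by linarith
    have t1 : Tendsto (fun R : ℝ => 2*R*Real.exp ((x-1)*R)) atTop (nhds 0) := by
      have h := (tendsto_rpow_mul_exp_neg_mul_atTop_nhds_zero 1 (1-x) hc1).const_mul (2:ℝ)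
      rw [mul_zero] at h
      apply h.congr
      intro R
      rw [Real.rpow_one, show -(1-x)*R = (x-1)*R by ring]
      ring
    have t2 : Tendsto (fun R : ℝ => 2*(R^2*Real.exp ((x-1)*Real.sqrt R))) atTop (nhds 0) := by
      have h := ((tendsto_rpow_mul_exp_neg_mul_atTop_nhds_zero 4 (1-x) hc1).comp
        CT.tendsto_sqrt_atTop).const_mul (2:ℝ)
      rw [mul_zero] at h
      apply h.congr'
      filter_upwards [eventually_ge_atTop (0:ℝ)] with R hR
      have h4 : (Real.sqrt R) ^ (4:ℝ) = R^2 := by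
        rw [show ((4:ℝ)) = ((4:ℕ):ℝ) by norm_num, Real.rpow_natCast,
          show (Real.sqrt R)^(4:ℕ) = ((Real.sqrt R)^2)^2 by ring, Real.sq_sqrt hR]
      simp only [Function.comp_apply]
      rw [h4, show -(1-x)*Real.sqrt R = (x-1)*Real.sqrt R by ring]
    have := t1.add t2
    rwa [add_zero] at this
  -- conclude
  have lim1 : Tendsto (fun R : ℝ => ∫ t in (-R)..R, f ↑t) atTop (nhds (∫ t : ℝ, f ↑t)) :=
    intervalIntegral_tendsto_integral hInt tendsto_neg_atTop_atBot tendsto_id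
  have lim2 : Tendsto (fun R : ℝ => ∫ t in (-R)..R, f ↑t) atTop (nhds 0) := by
    apply squeeze_zero_norm' _ hbnd0
    filter_upwards [eventually_ge_atTop (1:ℝ)] with R hR
    exact est R hR
  exact tendsto_nhds_unique lim1 lim2


lemma CT.integrableA (Φ₁ : ℂ → ℂ)
    (cont : ContinuousOn Φ₁ {z : ℂ | 0 ≤ z.im})
    (hbound : ∀ z : ℂ, 0 ≤ z.im → ‖Φ₁ z‖ ≤ Real.exp (-Real.sqrt (‖z‖)))
    {x : ℝ} (hx0 : 0 ≤ x) (hx1 : x < 1) :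
    Integrable (fun t : ℝ => Complex.cos (x * (t:ℂ) ^ (1/2:ℂ)) * Φ₁ t) := by
  have hb : ∀ z : ℂ, 0 ≤ z.im →
      ‖Complex.cos (x * z ^ (1/2:ℂ)) * Φ₁ z‖ ≤ Real.exp ((x-1) * Real.sqrt (‖z‖)) := by
    intro z hz
    have h1 : ‖Complex.cos (x * z ^ (1/2:ℂ)) * Φ₁ z‖
        = ‖(Complex.cos (x * z ^ (1/2:ℂ)))‖ * ‖Φ₁ z‖ := by
      simp [norm_mul]
    have h2 : ‖(Complex.cos (x * z ^ (1/2:ℂ)))‖ ≤ Real.exp (x * Real.sqrt (‖z‖)) := by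
      refine (CT.abs_cos_le _).trans (Real.exp_le_exp.2 ?_)
      have him : ((x:ℂ) * z ^ (1/2:ℂ)).im = x * (z ^ (1/2:ℂ)).im := by
        simp [Complex.mul_im]
      rw [him, _root_.abs_of_nonneg (mul_nonneg hx0 (CT.im_sqrt_nonneg hz))]
      exact mul_le_mul_of_nonneg_left (CT.im_sqrt_le z) hx0
    calc ‖Complex.cos (x * z ^ (1/2:ℂ)) * Φ₁ z‖
        ≤ Real.exp (x * Real.sqrt (‖z‖)) * Real.exp (-Real.sqrt (‖z‖)) := by
          rw [h1]; exact mul_le_mul h2 (hbound z hz) (norm_nonneg _) (Real.exp_pos _).le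
      _ = Real.exp ((x-1) * Real.sqrt (‖z‖)) := by
          rw [← Real.exp_add]; congr 1; ring
  have hcf : ContinuousOn (fun z : ℂ => Complex.cos (x * z ^ (1/2:ℂ)) * Φ₁ z) {z : ℂ | 0 ≤ z.im} := by
    apply ContinuousOn.mul _ cont
    exact Complex.continuous_cos.comp_continuousOn (continuousOn_const.mul CT.continuousOn_sqrt)
  have hfreal : Continuous (fun t : ℝ => Complex.cos (x * ((t:ℂ)) ^ (1/2:ℂ)) * Φ₁ (t:ℂ)) := by
    apply hcf.comp_continuous Complex.continuous_ofReal
    intro t; simp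
  apply Integrable.mono' (g := fun t : ℝ => Real.exp (-(1-x) * Real.sqrt |t|))
    (CT.integrable_exp_neg_sqrt_abs (by linarith)) hfreal.aestronglyMeasurable
  filter_upwards with t
  have := hb (t:ℂ) (by simp)
  rwa [Complex.norm_real, Real.norm_eq_abs, show ((x - 1) : ℝ) = -(1-x) by ring] at this




/-- elementary: `u ≤ (1/ε) exp (ε u)` for `u ≥ 0`, `ε > 0`. -/
lemma CT.le_exp_aux {ε u : ℝ} (hε : 0 < ε) (hu : 0 ≤ u) : u ≤ (1/ε) * Real.exp (ε * u) := by
  have h := Real.add_one_le_exp (ε * u)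
  have h2 : ε * u ≤ Real.exp (ε * u) := by linarith
  calc u = (ε * u) / ε := by field_simp
    _ ≤ Real.exp (ε*u) / ε := by gcongr
    _ = (1/ε) * Real.exp (ε * u) := by ring

lemma CT.re_mul_ofReal (y : ℂ) (r : ℝ) : (y * (r:ℂ)).re = y.re * r := by
  simp [Complex.mul_re]

lemma CT.im_mul_ofReal (y : ℂ) (r : ℝ) : (y * (r:ℂ)).im = y.im * r := by
  simp [Complex.mul_im]

/-- differentiability in the parameter of the `cosh` integral -/
lemma CT.differentiableAt_N {g : ℝ → ℝ} (hg : AEStronglyMeasurable g (volume.restrict (Ioi 0)))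
    {x : ℝ} (hint : IntegrableOn (fun t => Real.cosh (x * Real.sqrt t) * |g t|) (Ioi 0))
    {y₀ : ℂ} (hy₀ : |y₀.re| < x) :
    DifferentiableAt ℂ
      (fun y : ℂ => ∫ t in Ioi (0:ℝ), Complex.cosh (y * (Real.sqrt t : ℂ)) * (g t : ℂ)) y₀ := by
  set ε : ℝ := (x - |y₀.re|) / 2 with hε
  have hε0 : 0 < ε := by rw [hε]; linarith
  have hgc : AEStronglyMeasurable (fun t => ((g t : ℝ) : ℂ)) (volume.restrict (Ioi 0)) :=
    Complex.continuous_ofReal.comp_aestronglyMeasurable hg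
  have hcosh_int : Integrable (fun t => 2 * (Real.cosh (x * Real.sqrt t) * |g t|))
      (volume.restrict (Ioi 0)) := hint.const_mul 2
  have key := hasDerivAt_integral_of_dominated_loc_of_deriv_le (μ := volume.restrict (Ioi 0))
    (F := fun (y : ℂ) (t : ℝ) => Complex.cosh (y * (Real.sqrt t : ℂ)) * (g t : ℂ))
    (F' := fun (y : ℂ) (t : ℝ) => (Complex.sinh (y * (Real.sqrt t : ℂ)) * (Real.sqrt t : ℂ)) * (g t : ℂ))
    (x₀ := y₀) (s := ball y₀ ε)
    (bound := fun t => (1/ε) * (2 * (Real.cosh (x * Real.sqrt t) * |g t|)))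
    (ball_mem_nhds y₀ hε0) ?_ ?_ ?_ ?_ ?_ ?_
  · exact key.2.differentiableAt
  · -- measurability of F y for y near y₀
    filter_upwards with y
    apply AEStronglyMeasurable.mul _ hgc
    exact ((Complex.continuous_cosh.comp
      ((continuous_const.mul (Complex.continuous_ofReal.comp Real.continuous_sqrt))
        : Continuous fun t : ℝ => y * (Real.sqrt t : ℂ)))).aestronglyMeasurable
  · -- integrability of F y₀
    apply Integrable.mono' hcosh_int
    · apply AEStronglyMeasurable.mul _ hgc
      exact ((Complex.continuous_cosh.comp
        ((continuous_const.mul (Complex.continuous_ofReal.comp Real.continuous_sqrt))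
          : Continuous fun t : ℝ => y₀ * (Real.sqrt t : ℂ)))).aestronglyMeasurable
    filter_upwards [ae_restrict_mem measurableSet_Ioi] with t (ht : 0 < t)
    rw [norm_mul, Complex.norm_real, Real.norm_eq_abs]
    have h1 : ‖(Complex.cosh (y₀ * (Real.sqrt t : ℂ)))‖ ≤ Real.exp (x * Real.sqrt t) := by
      refine (CT.abs_cosh_le _).trans (Real.exp_le_exp.2 ?_)
      rw [CT.re_mul_ofReal, abs_mul, _root_.abs_of_nonneg (Real.sqrt_nonneg t)]
      exact mul_le_mul_of_nonneg_right (by linarith) (Real.sqrt_nonneg t)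
    calc ‖(Complex.cosh (y₀ * (Real.sqrt t : ℂ)))‖ * |g t|
        ≤ Real.exp (x * Real.sqrt t) * |g t| :=
          mul_le_mul_of_nonneg_right h1 (abs_nonneg _)
      _ ≤ 2 * (Real.cosh (x * Real.sqrt t) * |g t|) := by
          have hle : Real.exp (x * Real.sqrt t) ≤ 2 * Real.cosh (x * Real.sqrt t) := by
            rw [Real.cosh_eq]; nlinarith [Real.exp_pos (-(x * Real.sqrt t))]
          nlinarith [abs_nonneg (g t), mul_le_mul_of_nonneg_right hle (abs_nonneg (g t))]
  · -- measurability of F' y₀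
    refine AEStronglyMeasurable.mul ?_ hgc
    refine Continuous.aestronglyMeasurable ?_
    exact (Complex.continuous_sinh.comp
      ((continuous_const.mul (Complex.continuous_ofReal.comp Real.continuous_sqrt))
        : Continuous fun t : ℝ => y₀ * (Real.sqrt t : ℂ))).mul
      (Complex.continuous_ofReal.comp Real.continuous_sqrt)
  · -- uniform bound for F' on the ball
    filter_upwards [ae_restrict_mem measurableSet_Ioi] with t (ht : 0 < t)
    intro y hy
    have hyre : |y.re| ≤ x - ε := by
      have h1 : |y.re - y₀.re| ≤ ‖(y - y₀)‖ := by
        rw [show y.re - y₀.re = (y - y₀).re by simp]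
        exact Complex.abs_re_le_norm _
      have h2 : ‖(y - y₀)‖ < ε := by
        rw [mem_ball, Complex.dist_eq] at hy; exact hy
      have h3 : |y.re| - |y₀.re| ≤ |y.re - y₀.re| := abs_sub_abs_le_abs_sub _ _
      have hεx : ε = (x - |y₀.re|)/2 := hε
      linarith
    rw [norm_mul, norm_mul, Complex.norm_real, Real.norm_eq_abs, Complex.norm_real, Real.norm_eq_abs, _root_.abs_of_nonneg (Real.sqrt_nonneg t)]
    have h1 : ‖(Complex.sinh (y * (Real.sqrt t : ℂ)))‖ ≤ Real.exp ((x-ε) * Real.sqrt t) := by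
      refine (CT.abs_sinh_le _).trans (Real.exp_le_exp.2 ?_)
      rw [CT.re_mul_ofReal, abs_mul, _root_.abs_of_nonneg (Real.sqrt_nonneg t)]
      exact mul_le_mul_of_nonneg_right hyre (Real.sqrt_nonneg t)
    have h2 : Real.sqrt t ≤ (1/ε) * Real.exp (ε * Real.sqrt t) :=
      CT.le_exp_aux hε0 (Real.sqrt_nonneg t)
    calc ‖(Complex.sinh (y * (Real.sqrt t : ℂ)))‖ * Real.sqrt t * |g t|
        ≤ Real.exp ((x-ε) * Real.sqrt t) * ((1/ε) * Real.exp (ε * Real.sqrt t)) * |g t| := by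
          apply mul_le_mul_of_nonneg_right _ (abs_nonneg _)
          exact mul_le_mul h1 h2 (Real.sqrt_nonneg t) (Real.exp_pos _).le
      _ = (1/ε) * (Real.exp (x * Real.sqrt t) * |g t|) := by
          rw [show Real.exp ((x-ε) * Real.sqrt t) * (1/ε * Real.exp (ε * Real.sqrt t))
              = 1/ε * (Real.exp ((x-ε) * Real.sqrt t) * Real.exp (ε * Real.sqrt t)) by ring,
            ← Real.exp_add, show (x-ε) * Real.sqrt t + ε * Real.sqrt t = x * Real.sqrt t by ring]
          ring
      _ ≤ (1/ε) * (2 * (Real.cosh (x * Real.sqrt t) * |g t|)) := by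
          apply mul_le_mul_of_nonneg_left _ (by positivity)
          have hle : Real.exp (x * Real.sqrt t) ≤ 2 * Real.cosh (x * Real.sqrt t) := by
            rw [Real.cosh_eq]; nlinarith [Real.exp_pos (-(x * Real.sqrt t))]
          nlinarith [abs_nonneg (g t)]
  · exact hcosh_int.const_mul _
  · -- differentiability of the integrand in y
    filter_upwards with t
    intro y hy
    have h1 : HasDerivAt (fun y : ℂ => y * (Real.sqrt t : ℂ)) ((Real.sqrt t : ℂ)) y :=
      hasDerivAt_mul_const _
    have h2 : HasDerivAt (fun y : ℂ => Complex.cosh (y * (Real.sqrt t : ℂ)))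
        (Complex.sinh (y * (Real.sqrt t : ℂ)) * (Real.sqrt t : ℂ)) y :=
      (Complex.hasDerivAt_cosh _).comp y h1
    exact h2.mul_const _


section Pside

/-- differentiability in the parameter of the `cos` integral -/
lemma CT.differentiableAt_P {g : ℝ → ℝ} (hg : AEStronglyMeasurable g (volume.restrict (Ioi 0)))
    (hbd : ∀ t : ℝ, 0 < t → |g t| ≤ Real.exp (-Real.sqrt t))
    {y₀ : ℂ} (hy₀ : |y₀.im| < 1) :
    DifferentiableAt ℂ
      (fun y : ℂ => ∫ t in Ioi (0:ℝ), Complex.cos (y * (Real.sqrt t : ℂ)) * (g t : ℂ)) y₀ := by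
  set ε : ℝ := (1 - |y₀.im|) / 2 with hε
  have hε0 : 0 < ε := by rw [hε]; linarith
  have hgc : AEStronglyMeasurable (fun t => ((g t : ℝ) : ℂ)) (volume.restrict (Ioi 0)) :=
    Complex.continuous_ofReal.comp_aestronglyMeasurable hg
  have hmaster : Integrable (fun t => (2/ε) * ((1 + Real.sqrt t) * Real.exp (-(ε/2) * Real.sqrt t)))
      (volume.restrict (Ioi 0)) := (CT.integrableOn_master (by positivity)).const_mul _
  have key := hasDerivAt_integral_of_dominated_loc_of_deriv_le (μ := volume.restrict (Ioi 0))
    (F := fun (y : ℂ) (t : ℝ) => Complex.cos (y * (Real.sqrt t : ℂ)) * (g t : ℂ))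
    (F' := fun (y : ℂ) (t : ℝ) => (-Complex.sin (y * (Real.sqrt t : ℂ)) * (Real.sqrt t : ℂ)) * (g t : ℂ))
    (x₀ := y₀) (s := ball y₀ ε)
    (bound := fun t => (2/ε) * ((1 + Real.sqrt t) * Real.exp (-(ε/2) * Real.sqrt t)))
    (ball_mem_nhds y₀ hε0) ?_ ?_ ?_ ?_ hmaster ?_
  · exact key.2.differentiableAt
  · filter_upwards with y
    apply AEStronglyMeasurable.mul _ hgc
    exact ((Complex.continuous_cos.comp
      ((continuous_const.mul (Complex.continuous_ofReal.comp Real.continuous_sqrt))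
        : Continuous fun t : ℝ => y * (Real.sqrt t : ℂ)))).aestronglyMeasurable
  · -- integrability of F y₀
    apply Integrable.mono' hmaster
    · apply AEStronglyMeasurable.mul _ hgc
      exact ((Complex.continuous_cos.comp
        ((continuous_const.mul (Complex.continuous_ofReal.comp Real.continuous_sqrt))
          : Continuous fun t : ℝ => y₀ * (Real.sqrt t : ℂ)))).aestronglyMeasurable
    filter_upwards [ae_restrict_mem measurableSet_Ioi] with t (ht : 0 < t)
    rw [norm_mul, Complex.norm_real, Real.norm_eq_abs]
    have h1 : ‖(Complex.cos (y₀ * (Real.sqrt t : ℂ)))‖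
        ≤ Real.exp ((1 - 2*ε) * Real.sqrt t) := by
      refine (CT.abs_cos_le _).trans (Real.exp_le_exp.2 ?_)
      rw [CT.im_mul_ofReal, abs_mul, _root_.abs_of_nonneg (Real.sqrt_nonneg t)]
      apply mul_le_mul_of_nonneg_right _ (Real.sqrt_nonneg t)
      rw [hε]; linarith [hε]
    calc ‖(Complex.cos (y₀ * (Real.sqrt t : ℂ)))‖ * |g t|
        ≤ Real.exp ((1 - 2*ε) * Real.sqrt t) * Real.exp (-Real.sqrt t) :=
          mul_le_mul h1 (hbd t ht) (abs_nonneg _) (Real.exp_pos _).le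
      _ = Real.exp (-(2*ε) * Real.sqrt t) := by
          rw [← Real.exp_add]; congr 1; ring
      _ ≤ (2/ε) * ((1 + Real.sqrt t) * Real.exp (-(ε/2) * Real.sqrt t)) := by
          have h2 : Real.exp (-(2*ε) * Real.sqrt t) ≤ Real.exp (-(ε/2) * Real.sqrt t) := by
            apply Real.exp_le_exp.2
            nlinarith [Real.sqrt_nonneg t]
          have h3 : (1:ℝ) ≤ 2/ε * (1 + Real.sqrt t) := by
            rw [show (2:ℝ)/ε * (1 + Real.sqrt t) = (2/ε) + (2/ε)*Real.sqrt t by ring]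
            have : (1:ℝ) ≤ 2/ε := by rw [le_div_iff₀ hε0, hε]; linarith [abs_nonneg y₀.im]
            nlinarith [Real.sqrt_nonneg t, div_nonneg (by norm_num : (0:ℝ) ≤ 2) hε0.le]
          calc Real.exp (-(2*ε) * Real.sqrt t) ≤ Real.exp (-(ε/2) * Real.sqrt t) := h2
            _ ≤ (2/ε * (1 + Real.sqrt t)) * Real.exp (-(ε/2) * Real.sqrt t) :=
                le_mul_of_one_le_left (Real.exp_pos _).le h3
            _ = (2/ε) * ((1 + Real.sqrt t) * Real.exp (-(ε/2) * Real.sqrt t)) := by ring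
  · refine AEStronglyMeasurable.mul ?_ hgc
    refine Continuous.aestronglyMeasurable ?_
    exact ((Complex.continuous_sin.comp
      ((continuous_const.mul (Complex.continuous_ofReal.comp Real.continuous_sqrt))
        : Continuous fun t : ℝ => y₀ * (Real.sqrt t : ℂ))).neg).mul
      (Complex.continuous_ofReal.comp Real.continuous_sqrt)
  · -- uniform bound
    filter_upwards [ae_restrict_mem measurableSet_Ioi] with t (ht : 0 < t)
    intro y hy
    have hyim : |y.im| ≤ 1 - ε := by
      have h1 : |y.im - y₀.im| ≤ ‖(y - y₀)‖ := by
        rw [show y.im - y₀.im = (y - y₀).im by simp]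
        exact Complex.abs_im_le_norm _
      have h2 : ‖(y - y₀)‖ < ε := by
        rw [mem_ball, Complex.dist_eq] at hy; exact hy
      have h3 : |y.im| - |y₀.im| ≤ |y.im - y₀.im| := abs_sub_abs_le_abs_sub _ _
      have hεx : ε = (1 - |y₀.im|)/2 := hε
      linarith
    rw [norm_mul, norm_mul, norm_neg, Complex.norm_real, Real.norm_eq_abs,
      Complex.norm_real, Real.norm_eq_abs,
      _root_.abs_of_nonneg (Real.sqrt_nonneg t)]
    have h1 : ‖(Complex.sin (y * (Real.sqrt t : ℂ)))‖
        ≤ Real.exp ((1-ε) * Real.sqrt t) := by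
      refine (CT.abs_sin_le _).trans (Real.exp_le_exp.2 ?_)
      rw [CT.im_mul_ofReal, abs_mul, _root_.abs_of_nonneg (Real.sqrt_nonneg t)]
      exact mul_le_mul_of_nonneg_right hyim (Real.sqrt_nonneg t)
    have h2 : Real.sqrt t ≤ (1/(ε/2)) * Real.exp ((ε/2) * Real.sqrt t) :=
      CT.le_exp_aux (by positivity) (Real.sqrt_nonneg t)
    calc ‖(Complex.sin (y * (Real.sqrt t : ℂ)))‖ * Real.sqrt t * |g t|
        ≤ Real.exp ((1-ε) * Real.sqrt t) * ((1/(ε/2)) * Real.exp ((ε/2) * Real.sqrt t))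
            * Real.exp (-Real.sqrt t) := by
          apply mul_le_mul _ (hbd t ht) (abs_nonneg _) (by positivity)
          exact mul_le_mul h1 h2 (Real.sqrt_nonneg t) (Real.exp_pos _).le
      _ = (2/ε) * Real.exp (-(ε/2) * Real.sqrt t) := by
          rw [show Real.exp ((1-ε) * Real.sqrt t) * ((1/(ε/2)) * Real.exp ((ε/2) * Real.sqrt t))
                * Real.exp (-Real.sqrt t)
              = (1/(ε/2)) * (Real.exp ((1-ε) * Real.sqrt t) * Real.exp ((ε/2) * Real.sqrt t)
                * Real.exp (-Real.sqrt t)) by ring,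
            ← Real.exp_add, ← Real.exp_add,
            show (1-ε) * Real.sqrt t + (ε/2) * Real.sqrt t + -Real.sqrt t
              = -(ε/2) * Real.sqrt t by ring]
          rw [show (1:ℝ)/(ε/2) = 2/ε by field_simp]
      _ ≤ (2/ε) * ((1 + Real.sqrt t) * Real.exp (-(ε/2) * Real.sqrt t)) := by
          apply mul_le_mul_of_nonneg_left _ (by positivity)
          exact le_mul_of_one_le_left (Real.exp_pos _).le
            (by nlinarith [Real.sqrt_nonneg t])
  · filter_upwards with t
    intro y hy
    have h1 : HasDerivAt (fun y : ℂ => y * (Real.sqrt t : ℂ)) ((Real.sqrt t : ℂ)) y :=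
      hasDerivAt_mul_const _
    have h2 : HasDerivAt (fun y : ℂ => Complex.cos (y * (Real.sqrt t : ℂ)))
        (-Complex.sin (y * (Real.sqrt t : ℂ)) * (Real.sqrt t : ℂ)) y :=
      (Complex.hasDerivAt_cos _).comp y h1
    exact h2.mul_const _

end Pside

lemma CT.K_real (u l : ℝ) :
    Complex.cos ((u:ℂ) * (l:ℂ) ^ (1/2:ℂ)) =
      ((if 0 ≤ l then Real.cos (u * Real.sqrt l) else Real.cosh (u * Real.sqrt (-l)) : ℝ) : ℂ) := by
  split_ifs with h
  · rw [CT.sqrt_ofReal_nonneg h, ← Complex.ofReal_mul, ← Complex.ofReal_cos]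
  · push_neg at h
    rw [CT.sqrt_ofReal_neg h,
      show (u:ℂ) * ((Real.sqrt (-l) : ℂ) * I) = ((u * Real.sqrt (-l) : ℝ) : ℂ) * I by
        push_cast; ring,
      Complex.cos_mul_I, ← Complex.ofReal_cosh]




/-- Contour shift: if `Φ₁` is continuous on the closed upper half-plane, holomorphic in
its interior, with `|Φ₁(z)| ≤ exp(-√|z|)` there, and `σ(λ) = ∫_{-∞}^λ Re Φ₁(t) dt`, then
`∫ cos(x√λ) dσ(λ) = 0` for every `x ≥ 0`, where `cos(x√λ) := cosh(x√(-λ))` for `λ < 0`. -/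
theorem cosine_transform_vanishes_of_halfplane_decay (Φ₁ : ℂ → ℂ)
    (hol : DifferentiableOn ℂ Φ₁ {z : ℂ | 0 < z.im})
    (cont : ContinuousOn Φ₁ {z : ℂ | 0 ≤ z.im})
    (hbound : ∀ z : ℂ, 0 ≤ z.im →
      ‖Φ₁ z‖ ≤ Real.exp (-Real.sqrt (‖z‖))) :
    ∀ x ≥ (0 : ℝ),
      ∫ lam : ℝ,
          (if 0 ≤ lam then Real.cos (x * Real.sqrt lam)
            else Real.cosh (x * Real.sqrt (-lam))) * (Φ₁ (lam : ℂ)).re = 0 := by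
  intro x hx
  set φ : ℝ → ℝ := fun t => (Φ₁ t).re with hφdef
  have hφcont : Continuous φ := by
    apply Complex.continuous_re.comp
    exact cont.comp_continuous Complex.continuous_ofReal (fun t => by simp)
  have hφb : ∀ t : ℝ, |φ t| ≤ Real.exp (-Real.sqrt |t|) := by
    intro t
    have h1 : |φ t| ≤ ‖(Φ₁ t)‖ := Complex.abs_re_le_norm _
    have h2 := hbound t (by simp)
    rw [Complex.norm_real, Real.norm_eq_abs] at h2
    linarith
  have hpt : ∀ (u l : ℝ),
      (if 0 ≤ l then Real.cos (u * Real.sqrt l) else Real.cosh (u * Real.sqrt (-l))) * φ l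
        = (Complex.cos ((u:ℂ) * (l:ℂ) ^ (1/2:ℂ)) * Φ₁ l).re := by
    intro u l
    rw [CT.K_real u l, Complex.re_ofReal_mul]
  by_cases Hint : Integrable (fun lam : ℝ =>
      (if 0 ≤ lam then Real.cos (x * Real.sqrt lam)
        else Real.cosh (x * Real.sqrt (-lam))) * φ lam)
  swap
  · exact integral_undef Hint
  -- the two set-restricted pieces, as complex functions of the parameter
  set P : ℂ → ℂ := fun y => ∫ t in Ioi (0:ℝ), Complex.cos (y * (Real.sqrt t : ℂ)) * ((φ t : ℝ) : ℂ)
    with hPdef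
  set N : ℂ → ℂ := fun y => ∫ t in Ioi (0:ℝ),
      Complex.cosh (y * (Real.sqrt t : ℂ)) * ((φ (-t) : ℝ) : ℂ) with hNdef
  -- the splitting identity
  have hsplit : ∀ u : ℝ, Integrable (fun lam : ℝ =>
      (if 0 ≤ lam then Real.cos (u * Real.sqrt lam)
        else Real.cosh (u * Real.sqrt (-lam))) * φ lam) →
      ((∫ lam : ℝ, (if 0 ≤ lam then Real.cos (u * Real.sqrt lam)
        else Real.cosh (u * Real.sqrt (-lam))) * φ lam : ℝ) : ℂ) = P ↑u + N ↑u := by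
    intro u hI
    have hsplit1 : (∫ lam : ℝ, (if 0 ≤ lam then Real.cos (u * Real.sqrt lam)
          else Real.cosh (u * Real.sqrt (-lam))) * φ lam)
        = (∫ l in Iic (0:ℝ), (if 0 ≤ l then Real.cos (u * Real.sqrt l)
            else Real.cosh (u * Real.sqrt (-l))) * φ l)
          + ∫ l in Ioi (0:ℝ), (if 0 ≤ l then Real.cos (u * Real.sqrt l)
            else Real.cosh (u * Real.sqrt (-l))) * φ l := by
      rw [← setIntegral_univ, ← Iic_union_Ioi (a := (0:ℝ)),
        setIntegral_union (Iic_disjoint_Ioi le_rfl) measurableSet_Ioi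
          hI.integrableOn hI.integrableOn]
    have hneg : (∫ l in Iic (0:ℝ), (if 0 ≤ l then Real.cos (u * Real.sqrt l)
          else Real.cosh (u * Real.sqrt (-l))) * φ l)
        = ∫ t in Ioi (0:ℝ), Real.cosh (u * Real.sqrt t) * φ (-t) := by
      rw [show (Iic (0:ℝ)) = Iic (-0) by norm_num, ← integral_comp_neg_Ioi]
      apply setIntegral_congr_fun measurableSet_Ioi
      intro t ht
      have ht' : ¬ (0 ≤ -t) := by simp only [neg_nonneg, not_le]; exact ht
      simp only [if_neg ht', neg_neg]
    have hpos : (∫ l in Ioi (0:ℝ), (if 0 ≤ l then Real.cos (u * Real.sqrt l)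
          else Real.cosh (u * Real.sqrt (-l))) * φ l)
        = ∫ t in Ioi (0:ℝ), Real.cos (u * Real.sqrt t) * φ t := by
      apply setIntegral_congr_fun measurableSet_Ioi
      intro t ht
      simp only [if_pos (le_of_lt (mem_Ioi.mp ht))]
    have hIpos' : IntegrableOn (fun t : ℝ => Real.cos (u * Real.sqrt t) * φ t) (Ioi 0) := by
      apply (hI.integrableOn).congr_fun _ measurableSet_Ioi
      intro t ht
      simp only [if_pos (le_of_lt (mem_Ioi.mp ht))]
    have hIneg' : IntegrableOn (fun t : ℝ => Real.cosh (u * Real.sqrt t) * φ (-t)) (Ioi 0) := by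
      have h1 : IntegrableOn (fun lam : ℝ =>
          (if 0 ≤ lam then Real.cos (u * Real.sqrt lam)
            else Real.cosh (u * Real.sqrt (-lam))) * φ lam) (Iic 0) := hI.integrableOn
      have m : MeasurableEmbedding fun t : ℝ => -t :=
        (Homeomorph.neg ℝ).isClosedEmbedding.measurableEmbedding
      rw [← Measure.map_neg_eq_self (volume : Measure ℝ)] at h1
      rw [m.integrableOn_map_iff] at h1
      simp only [Function.comp_def, neg_preimage, neg_Iic, neg_zero] at h1
      have h2 := h1.mono_set (Ioi_subset_Ici (le_refl (0:ℝ)))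
      apply h2.congr_fun _ measurableSet_Ioi
      intro t ht
      have ht' : ¬ (0 ≤ -t) := by simp only [neg_nonneg, not_le]; exact ht
      simp only [if_neg ht', neg_neg]
    have hPco : P ↑u = ((∫ t in Ioi (0:ℝ), Real.cos (u * Real.sqrt t) * φ t : ℝ) : ℂ) := by
      rw [hPdef]
      calc (∫ t in Ioi (0:ℝ), Complex.cos ((u:ℂ) * (Real.sqrt t : ℂ)) * ((φ t : ℝ) : ℂ)) =
          ∫ t in Ioi (0:ℝ), Complex.ofRealCLM (Real.cos (u * Real.sqrt t) * φ t) := by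
            apply integral_congr_ae
            filter_upwards with t
            simp only [Complex.ofRealCLM_apply]
            push_cast [Complex.ofReal_cos]
            ring
        _ = _ := by rw [ContinuousLinearMap.integral_comp_comm _ hIpos']; simp
    have hNco : N ↑u = ((∫ t in Ioi (0:ℝ), Real.cosh (u * Real.sqrt t) * φ (-t) : ℝ) : ℂ) := by
      rw [hNdef]
      calc (∫ t in Ioi (0:ℝ), Complex.cosh ((u:ℂ) * (Real.sqrt t : ℂ)) * ((φ (-t) : ℝ) : ℂ)) =
          ∫ t in Ioi (0:ℝ), Complex.ofRealCLM (Real.cosh (u * Real.sqrt t) * φ (-t)) := by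
            apply integral_congr_ae
            filter_upwards with t
            simp only [Complex.ofRealCLM_apply]
            push_cast [Complex.ofReal_cosh]
            ring
        _ = _ := by rw [ContinuousLinearMap.integral_comp_comm _ hIneg']; simp
    rw [hsplit1, hneg, hpos, Complex.ofReal_add, hPco, hNco]
    ring
  -- vanishing for small parameter values
  have hker : ∀ u : ℝ, 0 ≤ u → u < 1 → P ↑u + N ↑u = 0 := by
    intro u hu0 hu1
    have hA := CT.lemmaA Φ₁ hol cont hbound hu0 hu1
    have hAint := CT.integrableA Φ₁ cont hbound hu0 hu1
    have huint : Integrable (fun lam : ℝ =>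
        (if 0 ≤ lam then Real.cos (u * Real.sqrt lam)
          else Real.cosh (u * Real.sqrt (-lam))) * φ lam) := by
      have h := hAint.re
      exact h.congr (Eventually.of_forall fun l => by
        have := (hpt u l).symm
        simpa using this)
    have h0 : (∫ lam : ℝ, (if 0 ≤ lam then Real.cos (u * Real.sqrt lam)
        else Real.cosh (u * Real.sqrt (-lam))) * φ lam) = 0 := by
      rw [show (fun lam : ℝ => (if 0 ≤ lam then Real.cos (u * Real.sqrt lam)
          else Real.cosh (u * Real.sqrt (-lam))) * φ lam)
        = (fun lam : ℝ => RCLike.re (Complex.cos ((u:ℂ) * (lam:ℂ) ^ (1/2:ℂ)) * Φ₁ lam))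
        from funext fun l => by rw [hpt u l]; rfl]
      rw [integral_re hAint, hA]
      simp
    have := hsplit u huint
    rw [h0] at this
    simpa using this.symm
  rcases lt_or_ge x 1 with hx1 | hx1
  · -- small x : conclude directly
    have hA := CT.lemmaA Φ₁ hol cont hbound hx hx1
    have hAint := CT.integrableA Φ₁ cont hbound hx hx1
    rw [show (fun lam : ℝ => (if 0 ≤ lam then Real.cos (x * Real.sqrt lam)
        else Real.cosh (x * Real.sqrt (-lam))) * φ lam)
      = (fun lam : ℝ => RCLike.re (Complex.cos ((x:ℂ) * (lam:ℂ) ^ (1/2:ℂ)) * Φ₁ lam))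
      from funext fun l => by rw [hpt x l]; rfl]
    rw [integral_re hAint, hA]
    simp
  -- large x
  have hx0 : (0:ℝ) < x := by linarith
  -- measurability inputs
  have hgP : AEStronglyMeasurable φ (volume.restrict (Ioi 0)) :=
    hφcont.aestronglyMeasurable.restrict
  have hgN : AEStronglyMeasurable (fun t : ℝ => φ (-t)) (volume.restrict (Ioi 0)) :=
    (hφcont.comp continuous_neg).aestronglyMeasurable.restrict
  -- integrability of cosh(x√t)|φ(-t)| on (0,∞)
  have Hcosh : IntegrableOn (fun t : ℝ => Real.cosh (x * Real.sqrt t) * |φ (-t)|) (Ioi 0) := by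
    have h1 : IntegrableOn (fun lam : ℝ =>
        (if 0 ≤ lam then Real.cos (x * Real.sqrt lam)
          else Real.cosh (x * Real.sqrt (-lam))) * φ lam) (Iic 0) := Hint.integrableOn
    have m : MeasurableEmbedding fun t : ℝ => -t :=
      (Homeomorph.neg ℝ).isClosedEmbedding.measurableEmbedding
    rw [← Measure.map_neg_eq_self (volume : Measure ℝ)] at h1
    rw [m.integrableOn_map_iff] at h1
    simp only [Function.comp_def, neg_preimage, neg_Iic, neg_zero] at h1
    have h2 : IntegrableOn (fun t : ℝ =>
        (if 0 ≤ -t then Real.cos (x * Real.sqrt (-t))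
          else Real.cosh (x * Real.sqrt (-(-t)))) * φ (-t)) (Ioi 0) :=
      h1.mono_set (Ioi_subset_Ici le_rfl)
    have h3 : IntegrableOn (fun t : ℝ => Real.cosh (x * Real.sqrt t) * φ (-t)) (Ioi 0) := by
      apply h2.congr_fun _ measurableSet_Ioi
      intro t ht
      have ht' : ¬ (0 ≤ -t) := by simp only [neg_nonneg, not_le]; exact ht
      simp only [if_neg ht', neg_neg]
    have h4 : IntegrableOn (fun t : ℝ => |Real.cosh (x * Real.sqrt t) * φ (-t)|) (Ioi 0) := h3.abs
    apply h4.congr_fun _ measurableSet_Ioi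
    intro t ht
    simp only [abs_mul]
    rw [_root_.abs_of_nonneg (Real.cosh_pos _).le]
  -- the region S
  set S : Set ℂ := {y : ℂ | |y.im| < 1} ∩ {y : ℂ | |y.re| < x} with hSdef
  have hSo : IsOpen S := by
    apply IsOpen.inter
    · exact isOpen_lt (continuous_abs.comp Complex.continuous_im) continuous_const
    · exact isOpen_lt (continuous_abs.comp Complex.continuous_re) continuous_const
  have hSconv : Convex ℝ S := by
    apply Convex.inter
    · have : {y : ℂ | |y.im| < 1} = Complex.imLm ⁻¹' (Ioo (-1) 1) := by
        ext y; simp [abs_lt, Complex.imLm]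
      rw [this]; exact (convex_Ioo _ _).linear_preimage _
    · have : {y : ℂ | |y.re| < x} = Complex.reLm ⁻¹' (Ioo (-x) x) := by
        ext y; simp [abs_lt, Complex.reLm]
      rw [this]; exact (convex_Ioo _ _).linear_preimage _
  -- analyticity of P + N on S
  have hPN_diff : DifferentiableOn ℂ (fun y => P y + N y) S := by
    intro y hy
    have h1 : DifferentiableAt ℂ P y :=
      CT.differentiableAt_P hgP (fun t ht => by
        have := hφb t
        rwa [_root_.abs_of_nonneg ht.le] at this) hy.1
    have h2 : DifferentiableAt ℂ N y := CT.differentiableAt_N hgN Hcosh hy.2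
    exact (h1.add h2).differentiableWithinAt
  have hPN_an : AnalyticOnNhd ℂ (fun y => P y + N y) S := hPN_diff.analyticOnNhd hSo
  -- vanishing frequently near 0
  have hfreq : ∃ᶠ z in nhdsWithin 0 {(0:ℂ)}ᶜ, P z + N z = 0 := by
    have hseq : Tendsto (fun n : ℕ => (((1/2 : ℝ)/(n+1) : ℝ) : ℂ)) atTop
        (nhdsWithin 0 {(0:ℂ)}ᶜ) := by
      rw [tendsto_nhdsWithin_iff]
      constructor
      · have hr : Tendsto (fun n : ℕ => ((1/2 : ℝ)/(n+1) : ℝ)) atTop (nhds 0) := by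
          have := tendsto_one_div_add_atTop_nhds_zero_nat.const_mul (1/2 : ℝ)
          rw [mul_zero] at this
          apply this.congr
          intro n; rw [mul_one_div]
        have h2 := (Complex.continuous_ofReal.tendsto 0).comp hr
        rw [Complex.ofReal_zero] at h2
        exact h2
      · filter_upwards with n
        simp only [mem_compl_iff, mem_singleton_iff, Complex.ofReal_eq_zero]
        positivity
    apply hseq.frequently
    apply Frequently.of_forall
    intro n
    apply hker
    · positivity
    · rw [div_lt_one (by positivity)]
      have : (0:ℝ) ≤ (n:ℝ) := Nat.cast_nonneg n
      linarith
  have h0S : (0:ℂ) ∈ S := by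
    constructor <;> simp [hx0]
  have hzero : EqOn (fun y => P y + N y) 0 S :=
    hPN_an.eqOn_zero_of_preconnected_of_frequently_eq_zero hSconv.isPreconnected h0S hfreq
  -- approach x from the left
  set yn : ℕ → ℝ := fun n => x - 1/(n+1) with hyndef
  have hyn_mem : ∀ n : ℕ, ((yn n : ℝ) : ℂ) ∈ S := by
    intro n
    have h1 : (0:ℝ) < 1/((n:ℝ)+1) := by positivity
    have h2 : 1/((n:ℝ)+1) ≤ 1 := by
      rw [div_le_one (by positivity)]
      have : (0:ℝ) ≤ (n:ℝ) := Nat.cast_nonneg n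
      linarith
    constructor
    · simp only [mem_setOf_eq, Complex.ofReal_im, abs_zero]; norm_num
    · simp only [mem_setOf_eq, Complex.ofReal_re, hyndef]
      rw [abs_lt]
      constructor <;> nlinarith
  have hyn_tend : Tendsto (fun n : ℕ => ((yn n : ℝ) : ℂ)) atTop (nhds ((x:ℝ):ℂ)) := by
    have hr : Tendsto yn atTop (nhds x) := by
      rw [hyndef]
      have h1 : Tendsto (fun n : ℕ => 1/((n:ℝ)+1)) atTop (nhds 0) :=
        tendsto_one_div_add_atTop_nhds_zero_nat
      have := tendsto_const_nhds.sub h1 (f := fun _ : ℕ => x)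
      rwa [sub_zero] at this
    exact (Complex.continuous_ofReal.tendsto x).comp hr
  have hP_lim : Tendsto (fun n => P ((yn n : ℝ) : ℂ)) atTop (nhds (P ((x:ℝ):ℂ))) := by
    have hd : DifferentiableAt ℂ P ((x:ℝ):ℂ) :=
      CT.differentiableAt_P hgP (fun t ht => by
        have := hφb t
        rwa [_root_.abs_of_nonneg ht.le] at this) (by simp)
    exact (hd.continuousAt.tendsto).comp hyn_tend
  have hN_lim : Tendsto (fun n => N ((yn n : ℝ) : ℂ)) atTop (nhds (N ((x:ℝ):ℂ))) := by
    rw [hNdef]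
    apply tendsto_integral_of_dominated_convergence
      (bound := fun t => 2 * (Real.cosh (x * Real.sqrt t) * |φ (-t)|))
    · intro n
      apply AEStronglyMeasurable.mul _
        (Complex.continuous_ofReal.comp_aestronglyMeasurable hgN)
      exact ((Complex.continuous_cosh.comp
        ((continuous_const.mul (Complex.continuous_ofReal.comp Real.continuous_sqrt))
          : Continuous fun t : ℝ => ((yn n : ℝ):ℂ) * (Real.sqrt t : ℂ)))).aestronglyMeasurable
    · exact Hcosh.const_mul 2
    · intro n
      filter_upwards [ae_restrict_mem measurableSet_Ioi] with t (ht : 0 < t)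
      rw [norm_mul, Complex.norm_real, Real.norm_eq_abs]
      have h1 : ‖(Complex.cosh (((yn n : ℝ):ℂ) * (Real.sqrt t : ℂ)))‖
          ≤ Real.exp (x * Real.sqrt t) := by
        refine (CT.abs_cosh_le _).trans (Real.exp_le_exp.2 ?_)
        have hre : ((((yn n : ℝ):ℂ)) * (Real.sqrt t : ℂ)).re = yn n * Real.sqrt t := by
          simp [Complex.mul_re]
        rw [hre, abs_mul, _root_.abs_of_nonneg (Real.sqrt_nonneg t)]
        apply mul_le_mul_of_nonneg_right _ (Real.sqrt_nonneg t)
        rw [hyndef, abs_le]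
        have h1 : (0:ℝ) < 1/((n:ℝ)+1) := by positivity
        have h2 : 1/((n:ℝ)+1) ≤ 1 := by
          rw [div_le_one (by positivity)]
          have : (0:ℝ) ≤ (n:ℝ) := Nat.cast_nonneg n
          linarith
        constructor <;> simp only <;> nlinarith
      have hle : Real.exp (x * Real.sqrt t) ≤ 2 * Real.cosh (x * Real.sqrt t) := by
        rw [Real.cosh_eq]; nlinarith [Real.exp_pos (-(x * Real.sqrt t))]
      calc ‖(Complex.cosh (((yn n : ℝ):ℂ) * (Real.sqrt t : ℂ)))‖ * |φ (-t)|
          ≤ Real.exp (x * Real.sqrt t) * |φ (-t)| :=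
            mul_le_mul_of_nonneg_right h1 (abs_nonneg _)
        _ ≤ 2 * (Real.cosh (x * Real.sqrt t) * |φ (-t)|) := by
            nlinarith [abs_nonneg (φ (-t)), mul_le_mul_of_nonneg_right hle (abs_nonneg (φ (-t)))]
    · filter_upwards with t
      have hc : Continuous (fun y : ℂ => Complex.cosh (y * (Real.sqrt t : ℂ)) * ((φ (-t) : ℝ):ℂ)) := by
        exact ((Complex.continuous_cosh.comp (continuous_mul_right _))).mul continuous_const
      exact (hc.continuousAt.tendsto).comp hyn_tend
  have hPN_x : P ((x:ℝ):ℂ) + N ((x:ℝ):ℂ) = 0 := by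
    have hzseq : Tendsto (fun n => P ((yn n : ℝ):ℂ) + N ((yn n : ℝ):ℂ)) atTop (nhds 0) := by
      have : (fun n => P ((yn n : ℝ):ℂ) + N ((yn n : ℝ):ℂ)) = fun _ => 0 := by
        funext n
        exact hzero (hyn_mem n)
      rw [this]
      exact tendsto_const_nhds
    exact tendsto_nhds_unique (hP_lim.add hN_lim) hzseq
  have := hsplit x Hint
  rw [hPN_x] at this
  exact_mod_cast this

end
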